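/- (Proposition 5) Let α > 2, R > 0, and set v = (α − 1)·R/α. Let P be the Pareto probability density P(ψ) = α·v^α/ψ^{α+1} for ψ ≥ v and P(ψ) = 0 otherwise (so the mean is μ_b = R). Then for every c_b ≥ v, the expected billing cost satisfies B_exp(c_b) = (g_b − i_b)·R + (i_b + p_b)·(α − 1)^{α−1}·R^α/(α^α·c_b^{α−1}) + i_b·c_b; the global minimizer of B_exp over [v, ∞) is c_b* = ((i_b + p_b)/i_b)^{1/α}·(α − 1)·R/α; and the minimum value is B_exp(c_b*) = [g_b − i_b + i_b·((i_b + p_b)/i_b)^{1/α}]·R. -/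

import Mathlib

open MeasureTheory Set

/-- Expected billing cost
`B_exp(c) = μ_b·(g_b + p_b) − p_b·c + (i_b + p_b)·∫₀^c (c − ψ) P(ψ) dψ`. -/
noncomputable def Bexp (P : ℝ → ℝ) (g_b i_b p_b μb c : ℝ) : ℝ :=
  μb * (g_b + p_b) - p_b * c + (i_b + p_b) * ∫ ψ in (0:ℝ)..c, (c - ψ) * P ψ

/-- The Pareto density with scale `v > 0` and shape `α`. -/
noncomputable def paretoPDF (α v : ℝ) : ℝ → ℝ :=
  fun ψ => if v ≤ ψ then α * v ^ α / ψ ^ (α + 1) else 0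

/-- (Proposition 5) For the Pareto density with shape `α > 2` and scale
`v = (α − 1)·R/α` (mean `μ_b = R`): for every `c_b ≥ v`,
`B_exp(c_b) = (g_b − i_b)·R + (i_b + p_b)·(α − 1)^{α−1}·R^α/(α^α·c_b^{α−1}) + i_b·c_b`;
the global minimizer of `B_exp` over `[v, ∞)` is
`c_b* = ((i_b + p_b)/i_b)^{1/α}·(α − 1)·R/α`; and
`B_exp(c_b*) = [g_b − i_b + i_b·((i_b + p_b)/i_b)^{1/α}]·R`. -/
lemma pareto_integral {α v c : ℝ} (hα : 1 < α) (hv : 0 < v) (hvc : v ≤ c) :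
    ∫ ψ in (0:ℝ)..c, (c - ψ) * paretoPDF α v ψ
      = v ^ α * c ^ (1 - α) / (α - 1) + c - α * v / (α - 1) := by
  have hc : 0 < c := hv.trans_le hvc
  have hα1 : α - 1 ≠ 0 := by linarith
  set g : ℝ → ℝ := fun ψ => (c - ψ) * (α * v ^ α / ψ ^ (α + 1)) with hg
  set F : ℝ → ℝ := fun ψ => -c * v ^ α * ψ ^ (-α) + α * v ^ α / (α - 1) * ψ ^ (1 - α)
    with hF
  have hderiv : ∀ ψ ∈ uIcc v c, HasDerivAt F (g ψ) ψ := by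
    intro ψ hψ
    rw [uIcc_of_le hvc] at hψ
    have hψ0 : 0 < ψ := lt_of_lt_of_le hv hψ.1
    have h1 : HasDerivAt (fun x : ℝ => x ^ (-α)) (-α * ψ ^ (-α - 1)) ψ :=
      Real.hasDerivAt_rpow_const (Or.inl hψ0.ne')
    have h2 : HasDerivAt (fun x : ℝ => x ^ (1 - α)) ((1 - α) * ψ ^ (1 - α - 1)) ψ :=
      Real.hasDerivAt_rpow_const (Or.inl hψ0.ne')
    have h := ((h1.const_mul (-c * v ^ α)).add (h2.const_mul (α * v ^ α / (α - 1))))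
    convert h using 1
    · rfl
    · rfl
    · rfl
    have hA : (0:ℝ) < ψ ^ (-α - 1) := Real.rpow_pos_of_pos hψ0 _
    have e2 : ψ ^ (-α) = ψ * ψ ^ (-α - 1) := by
      nth_rewrite 2 [← Real.rpow_one ψ]
      rw [← Real.rpow_add hψ0]; congr 1; ring
    have e6 : ψ ^ (α + 1) = (ψ ^ (-α - 1))⁻¹ := by
      rw [← Real.rpow_neg hψ0.le]; congr 1; ring
    have e4 : (1 : ℝ) - α - 1 = -α := by ring
    simp only [hg]
    rw [e4, e2, e6]
    field_simp
    ring
  have hgcont : ContinuousOn g (uIcc v c) := by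
    rw [uIcc_of_le hvc]
    apply ContinuousOn.mul (by fun_prop)
    apply ContinuousOn.div continuousOn_const
    · exact fun x hx => (Real.continuousAt_rpow_const x _
        (Or.inl (lt_of_lt_of_le hv hx.1).ne')).continuousWithinAt
    · exact fun x hx => (Real.rpow_pos_of_pos (lt_of_lt_of_le hv hx.1) _).ne'
  have hgint : IntervalIntegrable g volume v c := hgcont.intervalIntegrable
  have heq : EqOn (fun ψ => (c - ψ) * paretoPDF α v ψ) g (uIcc v c) := by
    intro ψ hψ
    rw [uIcc_of_le hvc] at hψ
    simp [paretoPDF, hψ.1, hg]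
  have hne : ∀ᵐ ψ : ℝ, ψ ≠ v := by
    simpa using measure_eq_zero_iff_ae_notMem.mp (measure_singleton v)
  have hmain : ∫ ψ in v..c, (c - ψ) * paretoPDF α v ψ = F c - F v := by
    rw [intervalIntegral.integral_congr heq]
    exact intervalIntegral.integral_eq_sub_of_hasDerivAt hderiv hgint
  have hzero : ∫ ψ in (0:ℝ)..v, (c - ψ) * paretoPDF α v ψ = 0 := by
    apply intervalIntegral.integral_zero_ae
    filter_upwards [hne] with ψ hψ hmem
    rw [uIoc_of_le hv.le] at hmem
    simp [paretoPDF, not_le.mpr (lt_of_le_of_ne hmem.2 hψ)]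
  have hint1 : IntervalIntegrable (fun ψ => (c - ψ) * paretoPDF α v ψ) volume 0 v := by
    rw [intervalIntegrable_iff_integrableOn_Ioc_of_le hv.le]
    refine (integrable_zero _ _ _).congr ?_
    filter_upwards [ae_restrict_of_ae hne, ae_restrict_mem measurableSet_Ioc] with ψ h1 h2
    simp [paretoPDF, not_le.mpr (lt_of_le_of_ne h2.2 h1)]
  have hint2 : IntervalIntegrable (fun ψ => (c - ψ) * paretoPDF α v ψ) volume v c := by
    apply hgint.congr
    intro ψ hψ
    exact (heq (uIoc_subset_uIcc hψ)).symm
  have hsplit := intervalIntegral.integral_add_adjacent_intervals hint1 hint2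
  rw [← hsplit, hzero, zero_add, hmain]
  have f1 : v ^ α * v ^ (-α) = 1 := by rw [← Real.rpow_add hv]; simp
  have f2 : v ^ α * v ^ (1 - α) = v := by
    rw [← Real.rpow_add hv]; norm_num
  have f3 : c * c ^ (-α) = c ^ (1 - α) := by
    nth_rewrite 1 [← Real.rpow_one c]
    rw [← Real.rpow_add hc, show (1:ℝ) + -α = 1 - α by ring]
  simp only [hF]
  rw [show -c * v ^ α * c ^ (-α) = -(v ^ α * (c * c ^ (-α))) by ring, f3,
    show -c * v ^ α * v ^ (-α) = -c * (v ^ α * v ^ (-α)) by ring, f1,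
    show α * v ^ α / (α - 1) * v ^ (1 - α) = α * (v ^ α * v ^ (1 - α)) / (α - 1) by ring, f2]
  field_simp
  ring

lemma bern {α t : ℝ} (hα : 1 < α) (ht : 0 < t) : α ≤ t ^ (1 - α) + (α - 1) * t := by
  have hα0 : (0:ℝ) < α := by linarith
  have hα1 : (0:ℝ) < α - 1 := by linarith
  have h := Real.geom_mean_le_arith_mean2_weighted
    (w₁ := 1/α) (w₂ := (α-1)/α) (p₁ := α * t ^ (1-α)) (p₂ := α * t)
    (by positivity) (by positivity) (by positivity) (by positivity)
    (by field_simp; ring)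
  have e0 : (0:ℝ) ≤ t ^ (1-α) := (Real.rpow_pos_of_pos ht _).le
  calc α = (α * t ^ (1-α)) ^ (1/α) * (α * t) ^ ((α-1)/α) := by
        rw [Real.mul_rpow hα0.le e0, Real.mul_rpow hα0.le ht.le,
          ← Real.rpow_mul ht.le]
        rw [show α ^ (1/α) * t ^ ((1-α)*(1/α)) * (α ^ ((α-1)/α) * t ^ ((α-1)/α))
            = (α ^ (1/α) * α ^ ((α-1)/α)) * (t ^ ((1-α)*(1/α)) * t ^ ((α-1)/α)) by ring,
          ← Real.rpow_add hα0, ← Real.rpow_add ht,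
          show 1/α + (α-1)/α = 1 by field_simp; ring,
          show (1-α)*(1/α) + (α-1)/α = 0 by field_simp; ring,
          Real.rpow_one, Real.rpow_zero, mul_one]
      _ ≤ 1/α * (α * t ^ (1-α)) + (α-1)/α * (α * t) := h
      _ = t ^ (1-α) + (α-1) * t := by field_simp
  
lemma min_ineq {α A t : ℝ} (hα : 1 < α) (hA : 0 < A) (ht : 0 < t) :
    A/(α-1) + A ≤ A/(α-1) * t ^ (1-α) + A * t := by
  have hα1 : (0:ℝ) < α - 1 := by linarith
  have hne : α - 1 ≠ 0 := hα1.ne'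
  have h := bern hα ht
  have h1 : A/(α-1) * α ≤ A/(α-1) * (t ^ (1-α) + (α-1) * t) :=
    mul_le_mul_of_nonneg_left h (by positivity)
  have h2 : A/(α-1) * (t ^ (1-α) + (α-1) * t) = A/(α-1) * t ^ (1-α) + A * t := by
    field_simp
  have h3 : A/(α-1) * α = A/(α-1) + A := by field_simp; ring
  linarith

lemma bexp_formula (α R g i p : ℝ) (hα : 2 < α) (hR : 0 < R) {c : ℝ}
    (hc : (α - 1) * R / α ≤ c) :
    Bexp (paretoPDF α ((α - 1) * R / α)) g i p R c
      = (g - i) * R + (i + p) * (α - 1) ^ (α - 1) * R ^ α / (α ^ α * c ^ (α - 1))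
        + i * c := by
  have hα0 : (0:ℝ) < α := by linarith
  have hα1 : (0:ℝ) < α - 1 := by linarith
  have hv : 0 < (α - 1) * R / α := by positivity
  have hc0 : 0 < c := hv.trans_le hc
  rw [Bexp, pareto_integral (by linarith) hv hc]
  have hv_pow : ((α - 1) * R / α) ^ α = (α - 1) ^ α * R ^ α / α ^ α := by
    rw [Real.div_rpow (by positivity) hα0.le, Real.mul_rpow hα1.le hR.le]
  have hpow : (α - 1) ^ (α - 1) = (α - 1) ^ α / (α - 1) := by
    rw [Real.rpow_sub hα1, Real.rpow_one]
  have hc_pow : c ^ (1 - α) = (c ^ (α - 1))⁻¹ := by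
    rw [show (1:ℝ) - α = -(α - 1) by ring, Real.rpow_neg hc0.le]
  rw [hv_pow, hpow, hc_pow]
  have n1 : (α:ℝ) ^ α ≠ 0 := (Real.rpow_pos_of_pos hα0 _).ne'
  have n2 : c ^ (α - 1) ≠ 0 := (Real.rpow_pos_of_pos hc0 _).ne'
  field_simp
  ring

theorem stmt_18 (α R g_b i_b p_b : ℝ) (hα : 2 < α) (hR : 0 < R)
    (hgb : 0 < g_b) (hib : 0 < i_b) (hpb : 0 < p_b) :
    (∀ c_b : ℝ, (α - 1) * R / α ≤ c_b →
      Bexp (paretoPDF α ((α - 1) * R / α)) g_b i_b p_b R c_b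
        = (g_b - i_b) * R
          + (i_b + p_b) * (α - 1) ^ (α - 1) * R ^ α / (α ^ α * c_b ^ (α - 1))
          + i_b * c_b) ∧
    ((α - 1) * R / α ≤ ((i_b + p_b) / i_b) ^ (1 / α) * (α - 1) * R / α ∧
      ∀ c_b : ℝ, (α - 1) * R / α ≤ c_b →
        Bexp (paretoPDF α ((α - 1) * R / α)) g_b i_b p_b R
            (((i_b + p_b) / i_b) ^ (1 / α) * (α - 1) * R / α)
          ≤ Bexp (paretoPDF α ((α - 1) * R / α)) g_b i_b p_b R c_b) ∧
    Bexp (paretoPDF α ((α - 1) * R / α)) g_b i_b p_b R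
        (((i_b + p_b) / i_b) ^ (1 / α) * (α - 1) * R / α)
      = (g_b - i_b + i_b * ((i_b + p_b) / i_b) ^ (1 / α)) * R := by
  have hα0 : (0:ℝ) < α := by linarith
  have hα1 : (0:ℝ) < α - 1 := by linarith
  have hα1' : (1:ℝ) < α := by linarith
  set s : ℝ := ((i_b + p_b) / i_b) ^ (1/α) with hs_def
  have hip : (1:ℝ) ≤ (i_b + p_b) / i_b := (one_le_div hib).mpr (by linarith)
  have hs1 : 1 ≤ s := Real.one_le_rpow hip (by positivity)
  have hs0 : 0 < s := lt_of_lt_of_le one_pos hs1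
  have hv : 0 < (α - 1) * R / α := by positivity
  have hcs_ge : (α - 1) * R / α ≤ s * (α - 1) * R / α := by
    calc (α - 1) * R / α ≤ s * ((α - 1) * R / α) := le_mul_of_one_le_left hv.le hs1
      _ = s * (α - 1) * R / α := by ring
  have hcs0 : 0 < s * (α - 1) * R / α := lt_of_lt_of_le hv hcs_ge
  have hform := fun (c : ℝ) (hc : (α - 1) * R / α ≤ c) =>
    bexp_formula α R g_b i_b p_b hα hR hc
  have hs_pow : s ^ α = (i_b + p_b) / i_b := by
    rw [hs_def, ← Real.rpow_mul (by positivity), one_div,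
      inv_mul_cancel₀ hα0.ne', Real.rpow_one]
  have hv_pow : ((α - 1) * R / α) ^ α = (α - 1) ^ α * R ^ α / α ^ α := by
    rw [Real.div_rpow (by positivity) hα0.le, Real.mul_rpow hα1.le hR.le]
  have hpow : (α - 1) ^ (α - 1) = (α - 1) ^ α / (α - 1) := by
    rw [Real.rpow_sub hα1, Real.rpow_one]
  have hcs_split : (s * (α - 1) * R / α) ^ α
      = (s * (α - 1) * R / α) ^ (α - 1) * (s * (α - 1) * R / α) := by
    rw [← Real.rpow_add_one hcs0.ne']
    norm_num
  have ncs : (s * (α - 1) * R / α) ^ (α - 1) ≠ 0 := (Real.rpow_pos_of_pos hcs0 _).ne'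
  have hD : i_b * (s * (α - 1) * R / α) ^ α / (α - 1)
      = (i_b + p_b) * (α - 1) ^ (α - 1) * R ^ α / α ^ α := by
    rw [show s * (α - 1) * R / α = s * ((α - 1) * R / α) by ring,
      Real.mul_rpow hs0.le hv.le, hs_pow, hv_pow, hpow]
    have n1 : (α:ℝ) ^ α ≠ 0 := (Real.rpow_pos_of_pos hα0 _).ne'
    field_simp
  have hTcs : (i_b + p_b) * (α - 1) ^ (α - 1) * R ^ α
        / (α ^ α * (s * (α - 1) * R / α) ^ (α - 1))
      = i_b * (s * (α - 1) * R / α) / (α - 1) := by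
    rw [← div_div, ← hD, hcs_split]
    field_simp
  refine ⟨hform, ⟨hcs_ge, ?_⟩, ?_⟩
  · intro c hc
    have hc0 : 0 < c := hv.trans_le hc
    rw [hform _ hcs_ge, hform _ hc, hTcs]
    set t : ℝ := c / (s * (α - 1) * R / α) with ht_def
    have ht : 0 < t := by positivity
    have hct : c = (s * (α - 1) * R / α) * t := by
      rw [ht_def, mul_div_cancel₀ _ hcs0.ne']
    have hTc : (i_b + p_b) * (α - 1) ^ (α - 1) * R ^ α / (α ^ α * c ^ (α - 1))
        = i_b * (s * (α - 1) * R / α) / (α - 1) * t ^ (1 - α) := by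
      rw [← div_div, ← hD, hct, Real.mul_rpow hcs0.le ht.le, hcs_split,
        show (1:ℝ) - α = -(α - 1) by ring, Real.rpow_neg ht.le]
      have nt : t ^ (α - 1) ≠ 0 := (Real.rpow_pos_of_pos ht _).ne'
      field_simp
    rw [hTc]
    have hmin := min_ineq hα1' (A := i_b * (s * (α - 1) * R / α))
      (by positivity) ht
    rw [hct]
    linarith [hmin]
  · rw [hform _ hcs_ge, hTcs]
    have key : i_b * (s * (α - 1) * R / α) / (α - 1) + i_b * (s * (α - 1) * R / α)
        = i_b * s * R := by
      field_simp
      ring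
    linarith [key]
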